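/- Let f : X̄ → X̄ with X̄ = X ∪ {∂}, X finite, and for each k let f^k : X̄ → X̄ and (X_i^k)_{i∈I_k} a finite family of pairwise disjoint subsets of X. Set G_k = {(f^k)→_{X_i^k} : i ∈ I_k} and Φ_k = R ∘ (G_k)⋆. Then for any probability measure b₀ supported in X and any k ∈ ℕ, |Φ_{0:k}(b₀) \ {δ_∂}| ≤ |supp(b₀)|. -/

import Mathlib

open scoped Classical

/-- Forward mapping `f→_S : X̄ → X̄` associated with a self-mapping `f` of
`X̄ = X ∪ {∂}` (with `∂` encoded by `none`) and a subset `S ⊆ X`: it sends `x ∈ X` to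
`f(x)` when `f(x) ∈ S`, and to `∂` otherwise, and `∂` to `∂`. -/
noncomputable def forwardBar {X : Type*} (f : Option X → Option X) (S : Finset X) :
    Option X → Option X
  | none => none
  | some x =>
    match f (some x) with
    | some y => if y ∈ S then some y else none
    | none => none

/-- Pushforward of a finitely supported measure on `X̄` by a self-mapping of `X̄`. -/
noncomputable def push {X : Type*} [Fintype X] (g : Option X → Option X)
    (ν : Option X → NNReal) : Option X → NNReal :=
  fun o => ∑ o' ∈ Finset.univ.filter (fun o' => g o' = o), ν o'

/-- Renormalization: the normalized restriction of `ν` to `X` when `ν(X) ≠ 0`,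
and the Dirac measure at `∂` otherwise. -/
noncomputable def renorm {X : Type*} [Fintype X] (ν : Option X → NNReal) :
    Option X → NNReal :=
  if (∑ x : X, ν (some x)) = 0 then (fun o => if o = none then 1 else 0)
  else fun o =>
    match o with
    | none => 0
    | some x => ν (some x) / ∑ x : X, ν (some x)

/-- The Dirac measure at the cemetery point `∂` (encoded by `none`). -/
noncomputable def diracCemetery (X : Type*) : Option X → NNReal :=
  fun o => if o = none then 1 else 0

/-- Cardinality of the support of the restriction to `X` of a measure on `X̄`. -/
noncomputable def suppCard {X : Type*} [Fintype X] (b : Option X → NNReal) : ℕ :=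
  (Finset.univ.filter (fun x : X => b (some x) ≠ 0)).card

/-- The set `Φ_{0:k}(b₀) = {φ_k ∘ ⋯ ∘ φ₀ (b₀) : φ_i ∈ Φ_i}`. -/
def iterSet {X : Type*}
    (Φ : ℕ → Set ((Option X → NNReal) → (Option X → NNReal)))
    (b₀ : Option X → NNReal) : ℕ → Set (Option X → NNReal)
  | 0 => {m | ∃ φ ∈ Φ 0, m = φ b₀}
  | k + 1 => {m | ∃ φ ∈ Φ (k + 1), ∃ m' ∈ iterSet Φ b₀ k, m = φ m'}

section Aux

variable {X : Type*} [Fintype X]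

lemma renorm_eq_dirac {ν : Option X → NNReal} (h : ∑ x : X, ν (some x) = 0) :
    renorm ν = diracCemetery X := by
  funext o
  simp [renorm, h, diracCemetery]

lemma ne_zero_of_renorm_some_ne_zero {ν : Option X → NNReal} {x : X}
    (h : renorm ν (some x) ≠ 0) : ν (some x) ≠ 0 := by
  intro h0
  apply h
  by_cases hs : (∑ x : X, ν (some x)) = 0
  · simp [renorm, hs]
  · simp [renorm, hs, h0]

lemma forwardBar_none (f : Option X → Option X) (S : Finset X) :
    forwardBar f S none = none := rfl

lemma forwardBar_some {f : Option X → Option X} {S : Finset X} {z x : X}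
    (h : forwardBar f S (some z) = some x) : f (some z) = some x ∧ x ∈ S := by
  simp only [forwardBar] at h
  rcases hf : f (some z) with _ | y
  · rw [hf] at h; simp at h
  · rw [hf] at h
    have h' : (if y ∈ S then (some y : Option X) else none) = some x := h
    by_cases hy : y ∈ S
    · rw [if_pos hy] at h'
      injection h' with h''
      subst h''
      exact ⟨rfl, hy⟩
    · rw [if_neg hy] at h'; simp at h'

lemma renorm_push_forwardBar_dirac (f : Option X → Option X) (S : Finset X) :
    renorm (push (forwardBar f S) (diracCemetery X)) = diracCemetery X := by
  apply renorm_eq_dirac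
  refine Finset.sum_eq_zero fun x _ => ?_
  show (∑ o' ∈ Finset.univ.filter (fun o' => forwardBar f S o' = some x),
      diracCemetery X o') = 0
  refine Finset.sum_eq_zero fun o' ho' => ?_
  simp only [Finset.mem_filter, Finset.mem_univ, true_and] at ho'
  cases o' with
  | none => simp [forwardBar_none] at ho'
  | some z => simp [diracCemetery]

lemma one_le_suppCard_renorm {ν : Option X → NNReal}
    (h : renorm ν ≠ diracCemetery X) : 1 ≤ suppCard (renorm ν) := by
  have hs : (∑ x : X, ν (some x)) ≠ 0 := fun h0 => h (renorm_eq_dirac h0)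
  obtain ⟨x, _, hx⟩ := Finset.exists_ne_zero_of_sum_ne_zero hs
  have : x ∈ Finset.univ.filter (fun x : X => renorm ν (some x) ≠ 0) := by
    simp [renorm, hs, div_eq_zero_iff, hx]
  calc 1 ≤ ({x} : Finset X).card := by simp
    _ ≤ _ := Finset.card_le_card (by simpa using this)

lemma sum_image_le_nat {α β : Type*} [DecidableEq β] (s : Finset α) (h : α → β) (G : β → ℕ) :
    ∑ b ∈ s.image h, G b ≤ ∑ a ∈ s, G (h a) := by
  induction s using Finset.induction with
  | empty => simp
  | insert _ _ hx ih =>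
    rename_i a s
    rw [Finset.image_insert, Finset.sum_insert hx]
    by_cases hm : h a ∈ s.image h
    · rw [Finset.insert_eq_self.mpr hm]
      exact ih.trans (Nat.le_add_left _ _)
    · rw [Finset.sum_insert hm]
      exact Nat.add_le_add_left ih _

lemma core_sum_le {ι : Type*} (g : Option X → Option X) (I' : Finset ι)
    (Xi' : ι → Finset X)
    (hdis : ∀ i ∈ I', ∀ j ∈ I', i ≠ j → Disjoint (Xi' i) (Xi' j))
    (μ : Option X → NNReal) :
    ∑ i ∈ I', suppCard (renorm (push (forwardBar g (Xi' i)) μ)) ≤ suppCard μ := by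
  classical
  set S : Finset X := Finset.univ.filter fun z => μ (some z) ≠ 0 with hS
  set B : Finset X :=
    Finset.univ.filter (fun x : X => (some x) ∈ S.image fun z => g (some z)) with hB
  have hsubset : ∀ i ∈ I',
      (Finset.univ.filter fun x : X =>
        renorm (push (forwardBar g (Xi' i)) μ) (some x) ≠ 0) ⊆ B ∩ Xi' i := by
    intro i _ x hx
    simp only [Finset.mem_filter, Finset.mem_univ, true_and] at hx
    have hpush : (∑ o' ∈ Finset.univ.filter
        (fun o' => forwardBar g (Xi' i) o' = some x), μ o') ≠ 0 :=
      ne_zero_of_renorm_some_ne_zero hx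
    obtain ⟨o', ho', hμo'⟩ := Finset.exists_ne_zero_of_sum_ne_zero hpush
    simp only [Finset.mem_filter, Finset.mem_univ, true_and] at ho'
    cases o' with
    | none => simp [forwardBar_none] at ho'
    | some z =>
      obtain ⟨hfz, hxXi⟩ := forwardBar_some ho'
      refine Finset.mem_inter.mpr ⟨?_, hxXi⟩
      simp only [hB, Finset.mem_filter, Finset.mem_univ, true_and, Finset.mem_image]
      exact ⟨z, by simp [hS, hμo'], hfz⟩
  calc ∑ i ∈ I', suppCard (renorm (push (forwardBar g (Xi' i)) μ))
      ≤ ∑ i ∈ I', (B ∩ Xi' i).card :=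
        Finset.sum_le_sum fun i hi => Finset.card_le_card (hsubset i hi)
    _ = (I'.biUnion fun i => B ∩ Xi' i).card := (Finset.card_biUnion (by
          intro i hi j hj hij
          exact Finset.disjoint_of_subset_left Finset.inter_subset_right
            (Finset.disjoint_of_subset_right Finset.inter_subset_right
              (hdis i hi j hj hij)))).symm
    _ ≤ B.card := Finset.card_le_card (by
          intro x hx
          simp only [Finset.mem_biUnion] at hx
          obtain ⟨i, _, hx⟩ := hx
          exact (Finset.mem_inter.mp hx).1)
    _ ≤ (S.image fun z => g (some z)).card := Finset.card_le_card_of_injOn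
          (fun x => (some x : Option X))
          (fun x hx => by simpa [hB] using hx)
          (fun a _ b _ h => Option.some_injective _ h)
    _ ≤ S.card := Finset.card_image_le
    _ = suppCard μ := rfl

end Aux

set_option maxHeartbeats 2000000 in
/-- For each `k`, let `f^k : X̄ → X̄` and `(X_i^k)_{i ∈ I_k}` a finite family of
pairwise disjoint subsets of `X`; set `G_k = {(f^k)→_{X_i^k} : i ∈ I_k}` and
`Φ_k = R ∘ (G_k)⋆`. Then for any probability measure `b₀` supported on `X` and any
`k ∈ ℕ`, `|Φ_{0:k}(b₀) \ {δ_∂}| ≤ |supp(b₀)|`. -/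
theorem card_iterSet_forward_le_suppCard {X ι : Type*} [Fintype X]
    (f : ℕ → Option X → Option X)
    (I : ℕ → Finset ι) (Xi : ℕ → ι → Finset X)
    (hdis : ∀ k : ℕ, ∀ i ∈ I k, ∀ j ∈ I k, i ≠ j → Disjoint (Xi k i) (Xi k j))
    (Φ : ℕ → Set ((Option X → NNReal) → (Option X → NNReal)))
    (hΦ : ∀ k : ℕ,
      Φ k = {ψ | ∃ i ∈ I k, ψ = fun ν => renorm (push (forwardBar (f k) (Xi k i)) ν)})
    (b₀ : Option X → NNReal) (hb₀ : ∑ o : Option X, b₀ o = 1)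
    (hb₀X : b₀ none = 0) (k : ℕ) :
    (iterSet Φ b₀ k \ {diracCemetery X}).ncard ≤ suppCard b₀ := by
  classical
  have key : ∀ n : ℕ, ∃ F : Finset (Option X → NNReal),
      (iterSet Φ b₀ n \ {diracCemetery X} : Set _) = ↑F ∧
      (∀ m ∈ F, 1 ≤ suppCard m) ∧
      ∑ m ∈ F, suppCard m ≤ suppCard b₀ := by
    intro n
    induction n with
    | zero =>
      refine ⟨((I 0).image fun i =>
          renorm (push (forwardBar (f 0) (Xi 0 i)) b₀)).filter
          (· ≠ diracCemetery X), ?_, ?_, ?_⟩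
      · ext m
        simp only [Set.mem_diff, Set.mem_singleton_iff, Finset.coe_filter,
          Finset.mem_image, Set.mem_setOf_eq, iterSet, hΦ 0]
        constructor
        · rintro ⟨⟨φ, ⟨i, hi, rfl⟩, rfl⟩, hne⟩
          exact ⟨⟨i, hi, rfl⟩, hne⟩
        · rintro ⟨⟨i, hi, rfl⟩, hne⟩
          exact ⟨⟨_, ⟨i, hi, rfl⟩, rfl⟩, hne⟩
      · intro m hm
        simp only [Finset.mem_filter, Finset.mem_image] at hm
        obtain ⟨⟨i, hi, rfl⟩, hne⟩ := hm
        exact one_le_suppCard_renorm hne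
      · calc ∑ m ∈ _, suppCard m
            ≤ ∑ m ∈ (I 0).image (fun i =>
                renorm (push (forwardBar (f 0) (Xi 0 i)) b₀)), suppCard m :=
              Finset.sum_le_sum_of_subset (Finset.filter_subset _ _)
          _ ≤ ∑ i ∈ I 0, suppCard (renorm (push (forwardBar (f 0) (Xi 0 i)) b₀)) :=
              sum_image_le_nat _ _ _
          _ ≤ suppCard b₀ := core_sum_le _ _ _ (hdis 0) b₀
    | succ n ih =>
      obtain ⟨F, hFset, hFpos, hFsum⟩ := ih
      refine ⟨((F ×ˢ I (n + 1)).image fun p =>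
          renorm (push (forwardBar (f (n + 1)) (Xi (n + 1) p.2)) p.1)).filter
          (· ≠ diracCemetery X), ?_, ?_, ?_⟩
      · ext m
        simp only [Set.mem_diff, Set.mem_singleton_iff, Finset.coe_filter,
          Finset.mem_image, Set.mem_setOf_eq, iterSet, hΦ (n + 1), Finset.mem_product]
        constructor
        · rintro ⟨⟨φ, ⟨i, hi, rfl⟩, m', hm', rfl⟩, hne⟩
          refine ⟨⟨(m', i), ⟨?_, hi⟩, rfl⟩, hne⟩
          by_cases hm'δ : m' = diracCemetery X
          · rw [hm'δ] at hne
            exact absurd (renorm_push_forwardBar_dirac (f (n + 1)) (Xi (n + 1) i)) hne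
          · have : m' ∈ (iterSet Φ b₀ n \ {diracCemetery X} : Set _) := ⟨hm', hm'δ⟩
            rw [hFset] at this
            exact this
        · rintro ⟨⟨⟨m', i⟩, ⟨hm', hi⟩, rfl⟩, hne⟩
          have : m' ∈ (iterSet Φ b₀ n \ {diracCemetery X} : Set _) := by
            rw [hFset]; exact hm'
          exact ⟨⟨_, ⟨i, hi, rfl⟩, m', this.1, rfl⟩, hne⟩
      · intro m hm
        simp only [Finset.mem_filter, Finset.mem_image] at hm
        obtain ⟨⟨p, hp, rfl⟩, hne⟩ := hm
        exact one_le_suppCard_renorm hne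
      · calc ∑ m ∈ _, suppCard m
            ≤ ∑ m ∈ (F ×ˢ I (n + 1)).image (fun p =>
                renorm (push (forwardBar (f (n + 1)) (Xi (n + 1) p.2)) p.1)),
                suppCard m :=
              Finset.sum_le_sum_of_subset (Finset.filter_subset _ _)
          _ ≤ ∑ p ∈ F ×ˢ I (n + 1),
                suppCard (renorm (push (forwardBar (f (n + 1)) (Xi (n + 1) p.2)) p.1)) :=
              sum_image_le_nat _ _ _
          _ = ∑ m' ∈ F, ∑ i ∈ I (n + 1),
                suppCard (renorm (push (forwardBar (f (n + 1)) (Xi (n + 1) i)) m')) :=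
              Finset.sum_product _ _ _
          _ ≤ ∑ m' ∈ F, suppCard m' :=
              Finset.sum_le_sum fun m' _ => core_sum_le _ _ _ (hdis (n + 1)) m'
          _ ≤ suppCard b₀ := hFsum
  obtain ⟨F, hFset, hFpos, hFsum⟩ := key k
  rw [hFset, Set.ncard_coe_finset]
  calc F.card = ∑ _m ∈ F, 1 := by simp
    _ ≤ ∑ m ∈ F, suppCard m := Finset.sum_le_sum hFpos
    _ ≤ suppCard b₀ := hFsum
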